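/- Fix p₀ ∈ {1, −1, 2, −2} and α = 2/p₀. Let p₁, g : ℂ → ℂ be functions, set d = α·p₁, and let 𝓛ₙ be the associated generalized Fibonacci polynomials of Lucas type over ℂ. Let n ≥ 1 and let r, s ∈ ℂ with s ≠ 0, s² = g(r) (in particular g(r) ≠ 0). If d(r)/s = 2i·cos((2j+1)π/(2n)) for some integer j with 0 ≤ j ≤ n − 1, then r is a root of 𝓛ₙ, i.e. 𝓛ₙ(r) = 0. -/
import Mathlib


/-- Generalized Fibonacci polynomials of Lucas type over `ℂ`:
`𝓛₀ = p₀`, `𝓛₁ = p₁`, `𝓛ₙ = d·𝓛ₙ₋₁ + g·𝓛ₙ₋₂` where `d = (2/p₀)·p₁`. -/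
noncomputable def GFPLC (p0 : ℂ) (p1 g : ℂ → ℂ) : ℕ → ℂ → ℂ
  | 0 => fun _ => p0
  | 1 => fun x => p1 x
  | n + 2 => fun x =>
      (2 / p0) * p1 x * GFPLC p0 p1 g (n + 1) x + g x * GFPLC p0 p1 g n x

theorem gfplc_roots (p0 : ℂ)
    (hp0 : p0 = 1 ∨ p0 = -1 ∨ p0 = 2 ∨ p0 = -2)
    (p1 g : ℂ → ℂ) (n : ℕ) (hn : 1 ≤ n)
    (r s : ℂ) (hs : s ≠ 0) (hsg : s ^ 2 = g r)
    (hroot : ∃ j : ℕ, j ≤ n - 1 ∧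
      (2 / p0) * p1 r / s =
        2 * Complex.I *
          Complex.cos ((2 * (j : ℂ) + 1) * (Real.pi : ℂ) / (2 * (n : ℂ)))) :
    GFPLC p0 p1 g n r = 0 := by
  obtain ⟨j, hj, hroot⟩ := hroot
  have hp0' : p0 ≠ 0 := by rcases hp0 with h | h | h | h <;> rw [h] <;> norm_num
  have hn0 : (n : ℂ) ≠ 0 := Nat.cast_ne_zero.mpr (by omega)
  set θ : ℂ := (2 * (j : ℂ) + 1) * (Real.pi : ℂ) / (2 * (n : ℂ)) with hθ
  set a : ℂ := Complex.I * s * Complex.exp (θ * Complex.I) with ha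
  set b : ℂ := Complex.I * s * Complex.exp (-θ * Complex.I) with hb
  have hsum : (2 / p0) * p1 r = a + b := by
    have h := hroot
    rw [div_eq_iff hs] at h
    rw [h, Complex.cos, ha, hb]
    ring
  have hprod : g r = -(a * b) := by
    rw [ha, hb, ← hsg]
    rw [show Complex.I * s * Complex.exp (θ * Complex.I) *
        (Complex.I * s * Complex.exp (-θ * Complex.I)) =
        Complex.I * Complex.I * s ^ 2 * Complex.exp (θ * Complex.I + -θ * Complex.I) by
      rw [Complex.exp_add]; ring]
    simp [Complex.I_mul_I]
  have key : ∀ m : ℕ, GFPLC p0 p1 g m r = p0 / 2 * (a ^ m + b ^ m) := by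
    intro m
    induction m using Nat.twoStepInduction with
    | zero =>
      show p0 = p0 / 2 * (a ^ 0 + b ^ 0)
      ring
    | one =>
      show p1 r = p0 / 2 * (a ^ 1 + b ^ 1)
      have h := hsum
      field_simp at h
      linear_combination h / 2
    | more m ih1 ih2 =>
      show (2 / p0) * p1 r * GFPLC p0 p1 g (m + 1) r + g r * GFPLC p0 p1 g m r = _
      rw [ih1, ih2, hsum, hprod]
      ring
  have hcos : Complex.cos ((n : ℂ) * θ) = 0 := by
    have hnθ : (n : ℂ) * θ = (Real.pi : ℂ) / 2 + (j : ℂ) * (Real.pi : ℂ) := by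
      rw [hθ]; field_simp; ring
    rw [hnθ, Complex.cos_add, Complex.cos_pi_div_two,
      show ((j : ℂ) * (Real.pi : ℂ)) = ((j : ℤ) : ℂ) * (Real.pi : ℂ) by push_cast; ring,
      Complex.sin_int_mul_pi]
    ring
  rw [key n]
  have habn : a ^ n + b ^ n = (Complex.I * s) ^ n * (2 * Complex.cos ((n : ℂ) * θ)) := by
    have e1 : Complex.exp (θ * Complex.I) ^ n = Complex.exp ((n : ℂ) * θ * Complex.I) := by
      rw [← Complex.exp_nat_mul]; ring_nf
    have e2 : Complex.exp (-θ * Complex.I) ^ n = Complex.exp (-((n : ℂ) * θ) * Complex.I) := by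
      rw [← Complex.exp_nat_mul]; ring_nf
    simp only [ha, hb, mul_pow, e1, e2, Complex.cos]
    ring
  rw [habn, hcos]
  ring
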